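/- The vertex model partition functions satisfy the boson-fermion duality V^{(m|n)}(q) = q^Ω · V^{(n|m)}(q^{-1}), where Ω = Σ_{j=1}^{N-1} ℰ_N(j), for any q > 0. -/

import Mathlib

open Finset

/-- The motif (binary sequence of length `N - 1`) associated to a composition
`(k_1, …, k_r)` of `N`: blocks of `k_i - 1` ones separated by single zeros. -/
def motifList {N : ℕ} (c : Composition N) : List Bool :=
  List.intercalate [false] (c.blocks.map fun k => List.replicate (k - 1) true)

/-- The index `i` viewed in `Fin N` (position of `s_i`). -/
def prevIdx {N : ℕ} (i : Fin (N - 1)) : Fin N :=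
  ⟨i.val, by have := i.isLt; omega⟩

/-- The index `i + 1` viewed in `Fin N` (position of `s_{i+1}`). -/
def nextIdx {N : ℕ} (i : Fin (N - 1)) : Fin N :=
  ⟨i.val + 1, by have := i.isLt; omega⟩

/-- `H^{(m|n)}(s, s')`: `0` if `s < s'` or `s = s'` is fermionic (0-based value `≥ m`),
and `1` if `s > s'` or `s = s'` is bosonic (0-based value `< m`).
Spin states are elements of `Fin k` (with `k = m + n`), the 0-based version of `{1, …, m+n}`:
bosonic states have value `< m`, fermionic states have value `≥ m`. -/
def Hvertex (m : ℕ) {k : ℕ} (s s' : Fin k) : ℕ :=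
  if s < s' ∨ (s = s' ∧ m ≤ s.val) then 0 else 1

/-- The motif `δ` of a spin path configuration: `δ_i = 1` iff `s_i < s_{i+1}` or
`s_i = s_{i+1}` is fermionic, i.e. `δ_i = 1 - H^{(m|n)}(s_i, s_{i+1})`. -/
def spinMotif (m : ℕ) {N k : ℕ} (s : Fin N → Fin k) (i : Fin (N - 1)) : Bool :=
  decide (s (prevIdx i) < s (nextIdx i) ∨
    (s (prevIdx i) = s (nextIdx i) ∧ m ≤ (s (prevIdx i)).val))

/-- The energy `E^{(m|n)}(s) = ∑_{j=1}^{N-1} ℰ_N(j) H^{(m|n)}(s_j, s_{j+1})` of a spin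
path configuration. -/
noncomputable def energy (m : ℕ) {N k : ℕ} (ℰ : ℕ → ℝ) (s : Fin N → Fin k) : ℝ :=
  ∑ i : Fin (N - 1), ℰ (i.val + 1) * (Hvertex m (s (prevIdx i)) (s (nextIdx i)) : ℝ)

/-- The vertex model partition function `V^{(m|n)}(q) = ∑_s q^{E^{(m|n)}(s)}`. -/
noncomputable def V (m n N : ℕ) (ℰ : ℕ → ℝ) (q : ℝ) : ℝ :=
  ∑ s : Fin N → Fin (m + n), q ^ (energy m ℰ s)

/-- The number of spin path configurations whose motif is the motif of the
composition `c`, i.e. the size of the fiber `F^{(m|n)}_c`. -/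
def fiberCard (m n N : ℕ) (c : Composition N) : ℕ :=
  (Finset.univ.filter fun s : Fin N → Fin (m + n) =>
    ∀ i : Fin (N - 1), spinMotif m s i = (motifList c).getD i.val true).card


lemma H_flip (m n : ℕ) (s s' : Fin (m + n)) :
    (Hvertex n (Fin.cast (add_comm m n) s.rev) (Fin.cast (add_comm m n) s'.rev) : ℝ) =
      1 - (Hvertex m s s' : ℝ) := by
  unfold Hvertex
  have hs := s.isLt
  have hs' := s'.isLt
  simp only [Fin.lt_def, Fin.ext_iff, Fin.coe_cast, Fin.val_rev]
  split_ifs with h1 h2 h2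
  · exfalso; omega
  · norm_num
  · norm_num
  · exfalso; omega

theorem V_duality' (m n N : ℕ) (hmn : 1 ≤ m + n) (hN : 1 ≤ N) (ℰ : ℕ → ℝ)
    (q : ℝ) (hq : 0 < q) :
    V m n N ℰ q =
      q ^ (∑ j ∈ Finset.range (N - 1), ℰ (j + 1)) * V n m N ℰ q⁻¹ := by
  set Ω : ℝ := ∑ j ∈ Finset.range (N - 1), ℰ (j + 1) with hΩ
  have hΩ' : Ω = ∑ i : Fin (N - 1), ℰ (i.val + 1) := by
    rw [hΩ, ← Fin.sum_univ_eq_sum_range (fun j => ℰ (j + 1)) (N - 1)]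
  -- the spin-flip equivalence
  set σ : Fin (m + n) ≃ Fin (n + m) :=
    Fin.revPerm.trans (finCongr (add_comm m n)) with hσ
  set E : (Fin N → Fin (m + n)) ≃ (Fin N → Fin (n + m)) :=
    Equiv.arrowCongr (Equiv.refl _) σ with hE
  have henergy : ∀ s : Fin N → Fin (m + n),
      energy n ℰ (E s) = Ω - energy m ℰ s := by
    intro s
    rw [hΩ']
    unfold energy
    rw [← Finset.sum_sub_distrib]
    apply Finset.sum_congr rfl
    intro i _
    have : (Hvertex n (E s (prevIdx i)) (E s (nextIdx i)) : ℝ) =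
        1 - (Hvertex m (s (prevIdx i)) (s (nextIdx i)) : ℝ) := by
      have := H_flip m n (s (prevIdx i)) (s (nextIdx i))
      simpa [hE, hσ, Equiv.arrowCongr, finCongr] using this
    rw [this]; ring
  unfold V
  rw [Finset.mul_sum, ← Equiv.sum_comp E (fun t => q ^ Ω * q⁻¹ ^ energy n ℰ t)]
  apply Finset.sum_congr rfl
  intro s _
  rw [henergy s, Real.inv_rpow hq.le, ← Real.rpow_neg hq.le,
    ← Real.rpow_add hq]
  ring_nf


/-- boson-fermion duality for the vertex model partition functions:
`V^{(m|n)}(q) = q^Ω · V^{(n|m)}(q⁻¹)` with `Ω = ∑_{j=1}^{N-1} ℰ_N(j)`, for `q > 0`. -/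
theorem V_duality (m n N : ℕ) (hmn : 1 ≤ m + n) (hN : 1 ≤ N) (ℰ : ℕ → ℝ)
    (q : ℝ) (hq : 0 < q) :
    V m n N ℰ q =
      q ^ (∑ j ∈ Finset.range (N - 1), ℰ (j + 1)) * V n m N ℰ q⁻¹ := by
  exact V_duality' m n N hmn hN ℰ q hq
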